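/- (Lemma 4.9, second inversion formula) For every p ∈ {0, …, n} and every 0 ≤ j ≤ l_p†, setting q = a_j^{(p)†}, one has l_q ≥ j and a_j^{(q)} = p. -/

import Mathlib

/-- `d(p) = max { s j : t j ≤ p }`, with `⊥` meaning "undefined" (i.e. `-∞`). -/
noncomputable def dvalue (m : ℕ) (s t : ℕ → ℤ) (p : ℤ) : WithBot ℤ :=
  ((Finset.range m).filter (fun j => t j ≤ p)).sup (fun j => (s j : WithBot ℤ))

/-- `d†(p) = min { t j : s j ≥ p }`, with `⊤` meaning "undefined" (i.e. `+∞`). -/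
noncomputable def ddual (m : ℕ) (s t : ℕ → ℤ) (p : ℤ) : WithTop ℤ :=
  ((Finset.range m).filter (fun j => p ≤ s j)).inf (fun j => (t j : WithTop ℤ))

/-- The extension of `d` to `WithBot ℤ`, sending `⊥` to `⊥`. -/
noncomputable def dW (m : ℕ) (s t : ℕ → ℤ) : WithBot ℤ → WithBot ℤ :=
  WithBot.recBotCoe ⊥ (dvalue m s t)

/-- The extension of `d†` to `WithTop ℤ`, sending `⊤` to `⊤`. -/
noncomputable def dtW (m : ℕ) (s t : ℕ → ℤ) : WithTop ℤ → WithTop ℤ :=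
  WithTop.recTopCoe ⊤ (ddual m s t)

/-- The (total extension of the) sequence `a_i^{(p)}`:
`a_0 = p`, `a_1 = p - 1`, `a_{i+2} = d(a_i)`.  For `i ≤ l_p` this agrees with the
sequence of the paper. -/
noncomputable def aSeq (m : ℕ) (s t : ℕ → ℤ) (p : ℤ) : ℕ → WithBot ℤ
  | 0 => (p : WithBot ℤ)
  | 1 => ((p - 1 : ℤ) : WithBot ℤ)
  | i + 2 => dW m s t (aSeq m s t p i)

/-- The length `l_p`: `l_0 = 0`, and for `p ≠ 0` it is the least `j ≥ 1` with
`d(a_{j-1}^{(p)}) = d(a_j^{(p)})` (undefined values compared as `⊥`). -/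
noncomputable def lSeq (m : ℕ) (s t : ℕ → ℤ) (p : ℤ) : ℕ :=
  if p = 0 then 0
  else sInf {j : ℕ | 1 ≤ j ∧ dW m s t (aSeq m s t p (j - 1)) = dW m s t (aSeq m s t p j)}

/-- The (total extension of the) dual sequence `a_i^{(p)†}`:
`a_0 = p`, `a_1 = p + 1`, `a_{i+2} = d†(a_i)`. -/
noncomputable def aSeqD (m : ℕ) (s t : ℕ → ℤ) (p : ℤ) : ℕ → WithTop ℤ
  | 0 => (p : WithTop ℤ)
  | 1 => ((p + 1 : ℤ) : WithTop ℤ)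
  | i + 2 => dtW m s t (aSeqD m s t p i)

/-- The dual length `l_p†`: `l_n† = 0`, and for `p ≠ n` it is the least `j ≥ 1` with
`d†(a_{j-1}^{(p)†}) = d†(a_j^{(p)†})` (undefined values compared as `⊤`). -/
noncomputable def lSeqD (n : ℤ) (m : ℕ) (s t : ℕ → ℤ) (p : ℤ) : ℕ :=
  if p = n then 0
  else sInf {j : ℕ | 1 ≤ j ∧ dtW m s t (aSeqD m s t p (j - 1)) = dtW m s t (aSeqD m s t p j)}

section helpers
variable (m : ℕ) (s t : ℕ → ℤ)

lemma ddual_mono {x y : ℤ} (h : x ≤ y) : ddual m s t x ≤ ddual m s t y := by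
  apply Finset.inf_mono
  intro l hl
  simp only [Finset.mem_filter, Finset.mem_range] at *
  exact ⟨hl.1, h.trans hl.2⟩

lemma ddual_attained {β c : ℤ} (h : ddual m s t β = (c : WithTop ℤ)) :
    ∃ l, l < m ∧ β ≤ s l ∧ t l = c := by
  classical
  by_cases hne : ((Finset.range m).filter (fun j => β ≤ s j)).Nonempty
  · obtain ⟨l, hl, hval⟩ := Finset.exists_mem_eq_inf _ hne (fun j => (t j : WithTop ℤ))
    rw [ddual] at h
    rw [hval] at h
    simp only [Finset.mem_filter, Finset.mem_range] at hl
    exact ⟨l, hl.1, hl.2, by exact_mod_cast h⟩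
  · rw [ddual, Finset.not_nonempty_iff_eq_empty.mp hne, Finset.inf_empty] at h
    exact absurd h (by simp)

lemma le_dvalue {β x : ℤ} (h : ddual m s t β ≤ (x : WithTop ℤ)) :
    (β : WithBot ℤ) ≤ dvalue m s t x := by
  have hne : ddual m s t β ≠ ⊤ := fun ht => by simp [ht] at h
  obtain ⟨c, hc⟩ := WithTop.ne_top_iff_exists.mp hne
  obtain ⟨l, hlm, hsl, htl⟩ := ddual_attained m s t hc.symm
  have hcx : c ≤ x := by rw [← hc] at h; exact_mod_cast h
  have hmem : l ∈ (Finset.range m).filter (fun j => t j ≤ x) := by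
    simp only [Finset.mem_filter, Finset.mem_range]
    exact ⟨hlm, by omega⟩
  calc (β : WithBot ℤ) ≤ (s l : WithBot ℤ) := by exact_mod_cast hsl
    _ ≤ dvalue m s t x := Finset.le_sup (f := fun j => (s j : WithBot ℤ)) hmem

lemma dvalue_lt {β' x : ℤ} (h : (x : WithTop ℤ) < ddual m s t β') :
    dvalue m s t x < (β' : WithBot ℤ) := by
  apply Finset.sup_lt_iff (by exact bot_lt_iff_ne_bot.mpr (by simp) : (⊥:WithBot ℤ) < β') |>.mpr
  intro l hl
  simp only [Finset.mem_filter, Finset.mem_range] at hl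
  by_contra hge
  push_neg at hge
  have hβs : β' ≤ s l := by exact_mod_cast hge
  have hmem : l ∈ (Finset.range m).filter (fun j => β' ≤ s j) := by
    simp only [Finset.mem_filter, Finset.mem_range]; exact ⟨hl.1, hβs⟩
  have h1 : ddual m s t β' ≤ (t l : WithTop ℤ) := Finset.inf_le hmem
  have h2 : ddual m s t β' ≤ (x : WithTop ℤ) := h1.trans (by exact_mod_cast hl.2)
  exact absurd (lt_of_lt_of_le h h2) (lt_irrefl _)

lemma dvalue_small (hs0 : ∀ j : ℕ, j < m → 0 ≤ s j) (hlen : ∀ j : ℕ, j < m → s j + 2 ≤ t j)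
    {x : ℤ} (hx : x < 2) : dvalue m s t x = ⊥ := by
  refine le_bot_iff.mp (Finset.sup_le ?_)
  intro l hl
  simp only [Finset.mem_filter, Finset.mem_range] at hl
  exact absurd hl.2 (by have := hs0 l hl.1; have := hlen l hl.1; omega)

end helpers

theorem inversion_formula_second
    (n : ℤ) (m : ℕ) (s t : ℕ → ℤ)
    (hn : 0 ≤ n)
    (hsmono : ∀ i j : ℕ, i < j → j < m → s i < s j)
    (htmono : ∀ i j : ℕ, i < j → j < m → t i < t j)
    (hs0 : ∀ j : ℕ, j < m → 0 ≤ s j)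
    (htn : ∀ j : ℕ, j < m → t j ≤ n)
    (hlen : ∀ j : ℕ, j < m → s j + 2 ≤ t j)
    (p : ℤ) (hp0 : 0 ≤ p) (hpn : p ≤ n)
    (j : ℕ) (hj : j ≤ lSeqD n m s t p)
    (q : ℤ) (hq : aSeqD m s t p j = (q : WithTop ℤ)) :
    j ≤ lSeq m s t q ∧ aSeq m s t q j = (p : WithBot ℤ) := by
  classical
  rcases Nat.eq_zero_or_pos j with hj0 | hj1
  · subst hj0
    have hpq : p = q := by exact_mod_cast (show (p : WithTop ℤ) = (q : WithTop ℤ) from hq)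
    subst hpq
    exact ⟨Nat.zero_le _, rfl⟩
  -- now 1 ≤ j
  have hpn' : p ≠ n := by
    intro h; rw [lSeqD, if_pos h] at hj; omega
  have hSinf : j ≤ sInf {k : ℕ | 1 ≤ k ∧
      dtW m s t (aSeqD m s t p (k - 1)) = dtW m s t (aSeqD m s t p k)} := by
    rwa [lSeqD, if_neg hpn'] at hj
  have hnonstop : ∀ k, 1 ≤ k → k < j →
      dtW m s t (aSeqD m s t p (k - 1)) ≠ dtW m s t (aSeqD m s t p k) := by
    intro k h1 h2 heq
    have := Nat.sInf_le (show k ∈ {k : ℕ | 1 ≤ k ∧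
      dtW m s t (aSeqD m s t p (k - 1)) = dtW m s t (aSeqD m s t p k)} from ⟨h1, heq⟩)
    omega
  -- strict integer chain along the dual sequence
  have chain : ∀ k, k ≤ j →
      (∃ x : ℤ, aSeqD m s t p k = (x : WithTop ℤ)) ∧
      aSeqD m s t p k < aSeqD m s t p (k + 1) := by
    intro k
    induction k using Nat.strong_induction_on with
    | _ k ih =>
      match k with
      | 0 =>
        intro _
        refine ⟨⟨p, rfl⟩, ?_⟩
        show (p : WithTop ℤ) < ((p + 1 : ℤ) : WithTop ℤ)
        exact_mod_cast lt_add_one p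
      | 1 =>
        intro _
        refine ⟨⟨p + 1, rfl⟩, ?_⟩
        show ((p + 1 : ℤ) : WithTop ℤ) < dtW m s t (aSeqD m s t p 0)
        show ((p + 1 : ℤ) : WithTop ℤ) < ddual m s t p
        rcases eq_or_ne (ddual m s t p) ⊤ with htop | htop
        · rw [htop]; exact WithTop.coe_lt_top _
        · obtain ⟨c, hc⟩ := WithTop.ne_top_iff_exists.mp htop
          obtain ⟨l, hlm, hsl, htl⟩ := ddual_attained m s t hc.symm
          rw [← hc]
          have := hlen l hlm
          exact_mod_cast (by omega : p + 1 < c)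
      | (k + 2) =>
        intro hk2
        obtain ⟨⟨x, hx⟩, hlt⟩ := ih k (by omega) (by omega)
        obtain ⟨⟨y, hy⟩, _⟩ := ih (k + 1) (by omega) (by omega)
        have hxy : x ≤ y := by
          rw [hx, hy] at hlt; exact_mod_cast hlt.le
        have e2 : aSeqD m s t p (k + 2) = ddual m s t x := by
          show dtW m s t (aSeqD m s t p k) = _
          rw [hx]; rfl
        have e3 : aSeqD m s t p (k + 3) = ddual m s t y := by
          show dtW m s t (aSeqD m s t p (k + 1)) = _
          rw [hy]; rfl
        have hmono : aSeqD m s t p (k + 2) ≤ aSeqD m s t p (k + 3) := by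
          rw [e2, e3]; exact ddual_mono m s t hxy
        have hne : aSeqD m s t p (k + 2) ≠ aSeqD m s t p (k + 3) := by
          have h := hnonstop (k + 1) (by omega) (by omega)
          show dtW m s t (aSeqD m s t p k) ≠ dtW m s t (aSeqD m s t p (k + 1))
          simpa using h
        refine ⟨?_, lt_of_le_of_ne hmono hne⟩
        have hnt : aSeqD m s t p (k + 2) ≠ ⊤ := by
          intro htop
          apply hne
          rw [htop]
          exact (top_le_iff.mp (htop ▸ hmono)).symm
        obtain ⟨c, hc⟩ := WithTop.ne_top_iff_exists.mp hnt
        exact ⟨c, hc.symm⟩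
    -- the main invariant: a_i^{(q)} lies in [b_{j-i}, b_{j-i+1})
  have inv : ∀ i, 1 ≤ i → i ≤ j → ∃ x : ℤ, aSeq m s t q i = (x : WithBot ℤ) ∧
      aSeqD m s t p (j - i) ≤ (x : WithTop ℤ) ∧ (x : WithTop ℤ) < aSeqD m s t p (j - i + 1) := by
    intro i
    induction i using Nat.strong_induction_on with
    | _ i ih =>
      match i with
      | 0 => intro h; omega
      | 1 =>
        intro _ h1j
        obtain ⟨c, hc⟩ := (chain (j - 1) (by omega)).1
        have hstr : aSeqD m s t p (j - 1) < aSeqD m s t p j := by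
          have := (chain (j - 1) (by omega)).2
          rwa [show j - 1 + 1 = j from by omega] at this
        have hcq : c < q := by
          rw [hc, hq] at hstr; exact_mod_cast hstr
        refine ⟨q - 1, rfl, ?_, ?_⟩
        · rw [hc]; exact_mod_cast (by omega : c ≤ q - 1)
        · rw [show j - 1 + 1 = j from by omega, hq]
          exact_mod_cast (by omega : q - 1 < q)
      | 2 =>
        intro _ h2j
        obtain ⟨β, hβ⟩ := (chain (j - 2) (by omega)).1
        obtain ⟨β', hβ'⟩ := (chain (j - 1) (by omega)).1
        have e1 : aSeqD m s t p j = ddual m s t β := by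
          rw [show j = (j - 2) + 2 from by omega]
          show dtW m s t (aSeqD m s t p (j - 2)) = _
          rw [hβ]; rfl
        have e2 : aSeqD m s t p (j + 1) = ddual m s t β' := by
          rw [show j + 1 = (j - 1) + 2 from by omega]
          show dtW m s t (aSeqD m s t p (j - 1)) = _
          rw [hβ']; rfl
        have hlow : ddual m s t β ≤ (q : WithTop ℤ) := by rw [← e1, hq]
        have hup : (q : WithTop ℤ) < ddual m s t β' := by
          rw [← e2, ← hq]
          exact (chain j le_rfl).2
        have hL := le_dvalue m s t hlow
        have hU := dvalue_lt m s t hup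
        have hnb : dvalue m s t q ≠ ⊥ := fun hb => by
          rw [hb] at hL; exact absurd hL (by simp)
        obtain ⟨x, hx⟩ := WithBot.ne_bot_iff_exists.mp hnb
        refine ⟨x, ?_, ?_, ?_⟩
        · show dW m s t (aSeq m s t q 0) = _
          exact hx.symm
        · rw [hβ]
          have h1 : (β : WithBot ℤ) ≤ (x : WithBot ℤ) := hx ▸ hL
          exact_mod_cast (show β ≤ x by exact_mod_cast h1)
        · rw [show j - 2 + 1 = j - 1 from by omega, hβ']
          have h1 : (x : WithBot ℤ) < (β' : WithBot ℤ) := hx ▸ hU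
          exact_mod_cast (show x < β' by exact_mod_cast h1)
      | (i + 3) =>
        intro _ h3j
        obtain ⟨x, hx, hxl, hxu⟩ := ih (i + 1) (by omega) (by omega) (by omega)
        obtain ⟨β, hβ⟩ := (chain (j - (i + 3)) (by omega)).1
        obtain ⟨β', hβ'⟩ := (chain (j - (i + 3) + 1) (by omega)).1
        have e1 : aSeqD m s t p (j - (i + 1)) = ddual m s t β := by
          rw [show j - (i + 1) = (j - (i + 3)) + 2 from by omega]
          show dtW m s t (aSeqD m s t p (j - (i + 3))) = _
          rw [hβ]; rfl
        have e2 : aSeqD m s t p (j - (i + 1) + 1) = ddual m s t β' := by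
          rw [show j - (i + 1) + 1 = (j - (i + 3) + 1) + 2 from by omega]
          show dtW m s t (aSeqD m s t p (j - (i + 3) + 1)) = _
          rw [hβ']; rfl
        have hL := le_dvalue m s t (e1 ▸ hxl)
        have hU := dvalue_lt m s t (e2 ▸ hxu)
        have hnb : dvalue m s t x ≠ ⊥ := fun hb => by
          rw [hb] at hL; exact absurd hL (by simp)
        obtain ⟨x', hx'⟩ := WithBot.ne_bot_iff_exists.mp hnb
        refine ⟨x', ?_, ?_, ?_⟩
        · show dW m s t (aSeq m s t q (i + 1)) = _
          rw [hx]; exact hx'.symm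
        · rw [hβ]
          have h1 : (β : WithBot ℤ) ≤ (x' : WithBot ℤ) := hx' ▸ hL
          exact_mod_cast (show β ≤ x' by exact_mod_cast h1)
        · rw [hβ']
          have h1 : (x' : WithBot ℤ) < (β' : WithBot ℤ) := hx' ▸ hU
          exact_mod_cast (show x' < β' by exact_mod_cast h1)
  -- the second conclusion
  have hfinal : aSeq m s t q j = (p : WithBot ℤ) := by
    obtain ⟨x, hx, hxl, hxu⟩ := inv j hj1 le_rfl
    rw [Nat.sub_self] at hxl
    rw [show j - j + 1 = 1 from by omega] at hxu
    have h1 : p ≤ x := by exact_mod_cast (show (p : WithTop ℤ) ≤ (x : WithTop ℤ) from hxl)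
    have h2 : x < p + 1 := by
      exact_mod_cast (show (x : WithTop ℤ) < ((p + 1 : ℤ) : WithTop ℤ) from hxu)
    rw [hx]
    exact_mod_cast (show x = p by omega)
  refine ⟨?_, hfinal⟩
  -- q ≠ 0
  have hq0 : q ≠ 0 := by
    by_cases hjone : j = 1
    · subst hjone
      have h1 : ((p + 1 : ℤ) : WithTop ℤ) = (q : WithTop ℤ) := hq
      have h2 : p + 1 = q := by exact_mod_cast h1
      omega
    · obtain ⟨β, hβ⟩ := (chain (j - 2) (by omega)).1
      have e1 : ddual m s t β = (q : WithTop ℤ) := by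
        rw [← hq, show j = (j - 2) + 2 from by omega]
        show _ = dtW m s t (aSeqD m s t p (j - 2))
        rw [hβ]; rfl
      obtain ⟨l, hlm, hsl, htl⟩ := ddual_attained m s t e1
      have h1 := hs0 l hlm
      have h2 := hlen l hlm
      omega
  -- the stop set for q is nonempty: the sequence decays
  have hdecay : ∀ k : ℕ, aSeq m s t q k ≤ ((q - k : ℤ) : WithBot ℤ) := by
    intro k
    induction k using Nat.strong_induction_on with
    | _ k ih =>
      match k with
      | 0 =>
        show (q : WithBot ℤ) ≤ _
        exact_mod_cast (by omega : q ≤ q - ((0:ℕ):ℤ))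
      | 1 =>
        show ((q - 1 : ℤ) : WithBot ℤ) ≤ _
        exact_mod_cast (by omega : q - 1 ≤ q - ((1:ℕ):ℤ))
      | (k + 2) =>
        have hk := ih k (by omega)
        show dW m s t (aSeq m s t q k) ≤ _
        rcases eq_or_ne (aSeq m s t q k) ⊥ with hb | hb
        · rw [hb]; exact bot_le
        · obtain ⟨x, hx⟩ := WithBot.ne_bot_iff_exists.mp hb
          rw [← hx] at hk
          have hxq : x ≤ q - k := by exact_mod_cast hk
          rw [← hx]
          show dvalue m s t x ≤ _
          refine Finset.sup_le ?_
          intro l hl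
          simp only [Finset.mem_filter, Finset.mem_range] at hl
          have h2 := hlen l hl.1
          have h3 : s l ≤ q - ((k : ℤ) + 2) := by omega
          have h4 : q - ((k + 2 : ℕ) : ℤ) = q - ((k : ℤ) + 2) := by push_cast; ring
          rw [h4]
          exact_mod_cast h3
  have hsmallk : ∀ k : ℕ, q.toNat + 2 ≤ k → dW m s t (aSeq m s t q k) = ⊥ := by
    intro k hk
    have hd := hdecay k
    rcases eq_or_ne (aSeq m s t q k) ⊥ with hb | hb
    · rw [hb]; rfl
    · obtain ⟨x, hx⟩ := WithBot.ne_bot_iff_exists.mp hb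
      rw [← hx] at hd ⊢
      have hx2 : x < 2 := by
        have h1 : x ≤ q - k := by exact_mod_cast hd
        have h2 : q ≤ (q.toNat : ℤ) := Int.self_le_toNat q
        have h3 : ((q.toNat : ℤ) + 2) ≤ (k : ℤ) := by exact_mod_cast hk
        omega
      show dvalue m s t x = ⊥
      exact dvalue_small m s t hs0 hlen hx2
  have hmem : (q.toNat + 3) ∈ {k : ℕ | 1 ≤ k ∧
      dW m s t (aSeq m s t q (k - 1)) = dW m s t (aSeq m s t q k)} := by
    refine ⟨by omega, ?_⟩
    rw [hsmallk _ (by omega), hsmallk _ (by omega)]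
  rw [lSeq, if_neg hq0]
  refine le_csInf ⟨_, hmem⟩ ?_
  rintro k ⟨hk1, hkeq⟩
  by_contra hkj
  push_neg at hkj
  have ek : aSeq m s t q (k + 1) = aSeq m s t q (k + 2) := by
    have h1 : aSeq m s t q (k + 1) = dW m s t (aSeq m s t q (k - 1)) := by
      rw [show k + 1 = (k - 1) + 2 from by omega]
      rfl
    rw [h1, hkeq]; rfl
  rcases lt_or_eq_of_le (show k + 1 ≤ j from hkj) with hk2j | hk1j
  · obtain ⟨x1, hx1, hx1l, _⟩ := inv (k + 1) (by omega) (by omega)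
    obtain ⟨x2, hx2, _, hx2u⟩ := inv (k + 2) (by omega) (by omega)
    rw [show j - (k + 2) + 1 = j - (k + 1) from by omega] at hx2u
    have hx12 : x1 = x2 := by
      have h := ek; rw [hx1, hx2] at h; exact_mod_cast h
    obtain ⟨c, hc⟩ := (chain (j - (k + 1)) (by omega)).1
    rw [hc] at hx1l hx2u
    have h1 : c ≤ x1 := by exact_mod_cast hx1l
    have h2 : x2 < c := by exact_mod_cast hx2u
    omega
  · have hj2 : 2 ≤ j := by omega
    obtain ⟨x, hx, hxl, hxu⟩ := inv (j - 1) (by omega) (by omega)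
    rw [show j - (j - 1) + 1 = 2 from by omega] at hxu
    have e2 : aSeqD m s t p 2 = ddual m s t p := rfl
    rw [e2] at hxu
    have hU := dvalue_lt m s t hxu
    have hcomp : aSeq m s t q (k + 2) = dvalue m s t x := by
      rw [show k + 2 = (j - 1) + 2 from by omega]
      show dW m s t (aSeq m s t q (j - 1)) = _
      rw [hx]; rfl
    rw [← ek, show k + 1 = j from hk1j, hfinal] at hcomp
    rw [← hcomp] at hU
    exact lt_irrefl _ hU
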